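/- Let k₊(τ) = -Σ_{j≥0} (4j+1)·2τ / ((2j+1/2)² + τ²)² for τ ∈ ℝ. Then k₊ is a bounded function on ℝ, and k₊(τ) = O(1/|τ|) as |τ| → ∞. -/

import Mathlib

open Real Filter Asymptotics

/-- The spectral function of the real-place commutator operator on the critical line. -/
noncomputable def kPlus (τ : ℝ) : ℝ :=
  -∑' j : ℕ, (4 * (j:ℝ) + 1) * (2 * τ) / (((2 * (j:ℝ) + 1/2)^2 + τ^2)^2)

/-- Telescoping sum. -/
lemma hasSum_tele (t : ℝ) (ht : 0 < t) :
    HasSum (fun j : ℕ => 1 / (2 * (j:ℝ) + t) - 1 / (2 * ((j:ℝ) + 1) + t)) (1 / t) := by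
  have hpos : ∀ j : ℕ, 0 < 2 * (j:ℝ) + t := by
    intro j; positivity
  have hnn : ∀ j : ℕ, 0 ≤ 1 / (2 * (j:ℝ) + t) - 1 / (2 * ((j:ℝ) + 1) + t) := by
    intro j
    have h1 := hpos j
    have h2 : (0:ℝ) < 2 * ((j:ℝ) + 1) + t := by positivity
    have : 1 / (2 * ((j:ℝ) + 1) + t) ≤ 1 / (2 * (j:ℝ) + t) := by
      apply one_div_le_one_div_of_le h1; linarith
    linarith
  rw [hasSum_iff_tendsto_nat_of_nonneg hnn]
  have hsum : ∀ n : ℕ, ∑ i ∈ Finset.range n,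
      (1 / (2 * (i:ℝ) + t) - 1 / (2 * ((i:ℝ) + 1) + t))
      = 1 / t - 1 / (2 * (n:ℝ) + t) := by
    intro n
    have := Finset.sum_range_sub' (fun i : ℕ => 1 / (2 * (i:ℝ) + t)) n
    simp only [Nat.cast_add, Nat.cast_one] at this ⊢
    rw [this]
    norm_num
  simp only [hsum]
  have htend : Filter.Tendsto (fun n : ℕ => 1 / (2 * (n:ℝ) + t)) atTop (nhds 0) := by
    simp only [one_div]
    exact Filter.Tendsto.comp tendsto_inv_atTop_zero
      (Filter.tendsto_atTop_add_const_right _ _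
        ((tendsto_natCast_atTop_atTop).const_mul_atTop (by norm_num)))
  have := (tendsto_const_nhds (x := 1 / t) (f := atTop (α := ℕ))).sub htend
  simpa using this

/-- Per-term bound by `2 / ((2j+1/2)^2 + τ^2)`. -/
lemma abs_term_le (τ : ℝ) (j : ℕ) :
    |(4 * (j:ℝ) + 1) * (2 * τ) / (((2 * (j:ℝ) + 1/2)^2 + τ^2)^2)|
      ≤ 2 / ((2 * (j:ℝ) + 1/2)^2 + τ^2) := by
  set n : ℝ := (j:ℝ) with hn
  have hn0 : 0 ≤ n := Nat.cast_nonneg j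
  have hD : 0 < (2 * n + 1/2)^2 + τ^2 := by positivity
  have hD2 : 0 < ((2 * n + 1/2)^2 + τ^2)^2 := by positivity
  rw [abs_div, abs_of_pos hD2, div_le_div_iff₀ hD2 hD]
  have habs : |(4 * n + 1) * (2 * τ)| = (4 * n + 1) * (2 * |τ|) := by
    rw [abs_mul, abs_of_nonneg (by linarith : (0:ℝ) ≤ 4 * n + 1), abs_mul]
    norm_num
  rw [habs]
  have hkey : (4 * n + 1) * |τ| ≤ (2 * n + 1/2)^2 + τ^2 := by
    nlinarith [sq_nonneg (2 * n + 1/2 - |τ|), sq_abs τ]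
  nlinarith [sq_nonneg ((2 * n + 1/2)^2 + τ^2), hD]

lemma abs_kPlus_le (τ : ℝ) (c : ℝ) (g : ℕ → ℝ) (hg : HasSum g c)
    (hb : ∀ j : ℕ, |(4 * (j:ℝ) + 1) * (2 * τ) / (((2 * (j:ℝ) + 1/2)^2 + τ^2)^2)| ≤ g j) :
    |kPlus τ| ≤ c := by
  have hsabs : Summable (fun j : ℕ =>
      |(4 * (j:ℝ) + 1) * (2 * τ) / (((2 * (j:ℝ) + 1/2)^2 + τ^2)^2)|) :=
    Summable.of_nonneg_of_le (fun j => abs_nonneg _) hb hg.summable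
  have h1 : |∑' j : ℕ, (4 * (j:ℝ) + 1) * (2 * τ) / (((2 * (j:ℝ) + 1/2)^2 + τ^2)^2)|
      ≤ ∑' j : ℕ, |(4 * (j:ℝ) + 1) * (2 * τ) / (((2 * (j:ℝ) + 1/2)^2 + τ^2)^2)| := by
    have := norm_tsum_le_tsum_norm (f := fun j : ℕ =>
      (4 * (j:ℝ) + 1) * (2 * τ) / (((2 * (j:ℝ) + 1/2)^2 + τ^2)^2))
      (by simp only [Real.norm_eq_abs]; exact hsabs)
    simp only [Real.norm_eq_abs] at this
    exact this
  have h2 := Summable.tsum_le_tsum hb hsabs hg.summable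
  rw [hg.tsum_eq] at h2
  have h3 : |kPlus τ|
      = |∑' j : ℕ, (4 * (j:ℝ) + 1) * (2 * τ) / (((2 * (j:ℝ) + 1/2)^2 + τ^2)^2)| := by
    rw [kPlus, abs_neg]
  rw [h3]
  linarith

theorem kPlus_bounded_and_decay :
    (∃ C : ℝ, ∀ τ : ℝ, |kPlus τ| ≤ C) ∧
      kPlus =O[Filter.cocompact ℝ] (fun τ : ℝ => 1 / |τ|) := by
  constructor
  · refine ⟨10, fun τ => ?_⟩
    have hg : HasSum (fun j : ℕ => 5 * (1 / (2 * (j:ℝ) + 1/2) - 1 / (2 * ((j:ℝ) + 1) + 1/2))) 10 := by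
      have := (hasSum_tele (1/2) (by norm_num)).mul_left 5
      norm_num at this
      convert this using 2 <;> norm_num <;> rfl
    apply abs_kPlus_le τ 10 _ hg
    intro j
    refine le_trans (abs_term_le τ j) ?_
    set n : ℝ := (j:ℝ) with hn
    have hn0 : 0 ≤ n := Nat.cast_nonneg j
    have hD : 0 < (2 * n + 1/2)^2 + τ^2 := by positivity
    have hu : (0:ℝ) < 2 * n + 1/2 := by linarith
    have hu2 : (0:ℝ) < 2 * (n + 1) + 1/2 := by linarith
    have hrhs : 5 * (1 / (2 * n + 1/2) - 1 / (2 * (n + 1) + 1/2))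
        = 10 / ((2 * n + 1/2) * (2 * (n + 1) + 1/2)) := by
      field_simp; ring
    rw [hrhs, div_le_div_iff₀ hD (by positivity)]
    nlinarith [sq_nonneg τ, sq_nonneg n]
  · rw [isBigO_iff]
    refine ⟨4, ?_⟩
    have hmem : {τ : ℝ | τ ≠ 0} ∈ Filter.cocompact ℝ := by
      rw [Filter.mem_cocompact]
      exact ⟨{0}, isCompact_singleton, by intro x hx; simpa using hx⟩
    filter_upwards [hmem] with τ hτ
    have ht : 0 < |τ| := abs_pos.mpr hτ
    have hg : HasSum (fun j : ℕ => 4 * (1 / (2 * (j:ℝ) + |τ|) - 1 / (2 * ((j:ℝ) + 1) + |τ|)))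
        (4 * (1 / |τ|)) := (hasSum_tele |τ| ht).mul_left 4
    have hb : |kPlus τ| ≤ 4 * (1 / |τ|) := by
      apply abs_kPlus_le τ _ _ hg
      intro j
      refine le_trans (abs_term_le τ j) ?_
      set n : ℝ := (j:ℝ) with hn
      have hn0 : 0 ≤ n := Nat.cast_nonneg j
      have hD : 0 < (2 * n + 1/2)^2 + τ^2 := by positivity
      have hu : (0:ℝ) < 2 * n + |τ| := by linarith
      have hu2 : (0:ℝ) < 2 * (n + 1) + |τ| := by linarith
      have hrhs : 4 * (1 / (2 * n + |τ|) - 1 / (2 * (n + 1) + |τ|))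
          = 8 / ((2 * n + |τ|) * (2 * (n + 1) + |τ|)) := by
        field_simp; ring
      rw [hrhs, div_le_div_iff₀ hD (by positivity)]
      nlinarith [sq_nonneg (2 * n - |τ|), sq_nonneg (|τ| - 1/2), sq_abs τ, sq_nonneg n]
    simpa [Real.norm_eq_abs, abs_of_pos ht, abs_of_pos (one_div_pos.mpr ht)] using hb
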